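/- Color ignorance: fix 1 ≤ m ≤ n and 𝔦,𝔧,𝔨,𝔩 ∈ {0,1}^m. For all i, j ∈ {0,1}^n with i_{[1,m]} = 𝔦 and j_{[1,m]} = 𝔧, the sum of L^n(i,j;k,l) over all k, l ∈ {0,1}^n satisfying k_{[1,m]} = 𝔨 and l_{[1,m]} = 𝔩 equals L^m(𝔦,𝔧;𝔨,𝔩). -/

import Mathlib

open Finset

/-- The single-colored vertex weight matrix `L¹`. -/
def L1 (t : ℝ) : Bool → Bool → Bool → Bool → ℝ
  | true,  true,  true,  true  => t
  | true,  true,  false, false => 1 - t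
  | true,  false, true,  false => 1
  | false, true,  false, true  => 1
  | false, false, false, false => 1
  | _, _, _, _ => 0

/-- The `r`-fold projection `s_r(x)`: parity of the sum of the first `r` coordinates. -/
def sproj {n : ℕ} (x : Fin n → Bool) (r : Fin n) : Bool :=
  decide ((∑ m ∈ Finset.univ.filter (fun m => m ≤ r), (if x m then (1 : ℕ) else 0)) % 2 = 1)

/-- The modified minimum `𝔪𝔦𝔫` of a (nonempty) family: `0` if both `t` and `1 - t`
occur among its values, the ordinary minimum otherwise. -/
noncomputable def mminOver (t : ℝ) {n : ℕ} (f : Fin (n + 1) → ℝ) : ℝ := by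
  classical
  exact if (∃ r, f r = t) ∧ (∃ r, f r = 1 - t) then 0
    else Finset.univ.inf' Finset.univ_nonempty f

/-- Binary modified minimum. -/
noncomputable def mmin (t x y : ℝ) : ℝ := by
  classical
  exact if (x = t ∧ y = 1 - t) ∨ (x = 1 - t ∧ y = t) then 0 else min x y

/-- The colored vertex weight matrix `Lⁿ` (here with `n + 1` colors). -/
noncomputable def Ln (t : ℝ) {n : ℕ} (i j k l : Fin (n + 1) → Bool) : ℝ :=
  mminOver t (fun r => L1 t (sproj i r) (sproj j r) (sproj k r) (sproj l r))

section Aux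

variable {t : ℝ}

lemma L1_mem (t : ℝ) (a b c d : Bool) :
    L1 t a b c d = 0 ∨ L1 t a b c d = t ∨ L1 t a b c d = 1 - t ∨ L1 t a b c d = 1 := by
  cases a <;> cases b <;> cases c <;> cases d <;> simp [L1]

lemma sproj_castSucc {n : ℕ} (x : Fin (n + 1) → Bool) (r : Fin n) :
    sproj x (Fin.castSucc r) = sproj (fun m => x (Fin.castSucc m)) r := by
  unfold sproj
  congr 1
  rw [Finset.sum_filter, Finset.sum_filter, Fin.sum_univ_castSucc]
  have : ¬ (Fin.last n ≤ Fin.castSucc r) := not_le.mpr (Fin.castSucc_lt_last r)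
  simp [this, Fin.castSucc_le_castSucc_iff]

lemma sproj_snoc_castSucc {n : ℕ} (k : Fin (n + 1) → Bool) (a : Bool) (r : Fin (n + 1)) :
    sproj (Fin.snoc k a) (Fin.castSucc r) = sproj k r := by
  rw [sproj_castSucc]
  simp [Fin.snoc_castSucc]

lemma sproj_last {n : ℕ} (x : Fin (n + 1) → Bool) :
    sproj x (Fin.last n)
      = decide ((∑ m, (if x m then (1 : ℕ) else 0)) % 2 = 1) := by
  unfold sproj
  rw [Finset.filter_true_of_mem (fun m _ => Fin.le_last m)]

lemma sproj_snoc_last {n : ℕ} (k : Fin (n + 1) → Bool) (a : Bool) :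
    sproj (Fin.snoc k a) (Fin.last (n + 1)) = xor a (sproj k (Fin.last n)) := by
  rw [sproj_last, sproj_last, Fin.sum_univ_castSucc]
  simp only [Fin.snoc_castSucc, Fin.snoc_last]
  have hS : ∀ S : ℕ, decide ((S + 1) % 2 = 1) = !decide (S % 2 = 1) := by
    intro S; rcases Nat.mod_two_eq_zero_or_one S with h | h <;> simp [Nat.add_mod, h]
  cases a <;> simp [hS]

end Aux

section MMin

variable {t : ℝ} {n : ℕ}

lemma inf'_snoc (F : Fin (n + 1) → ℝ) (v : ℝ) :
    Finset.univ.inf' Finset.univ_nonempty (Fin.snoc F v : Fin (n + 2) → ℝ)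
      = min (Finset.univ.inf' Finset.univ_nonempty F) v := by
  apply le_antisymm
  · apply le_min
    · apply Finset.le_inf'
      intro b _
      have h := Finset.inf'_le (s := (Finset.univ : Finset (Fin (n + 2))))
        (Fin.snoc F v : Fin (n + 2) → ℝ) (Finset.mem_univ (Fin.castSucc b))
      simpa only [Fin.snoc_castSucc] using h
    · have h := Finset.inf'_le (s := (Finset.univ : Finset (Fin (n + 2))))
        (Fin.snoc F v : Fin (n + 2) → ℝ) (Finset.mem_univ (Fin.last (n + 1)))
      simpa only [Fin.snoc_last] using h
  · apply Finset.le_inf'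
    intro b _
    induction b using Fin.lastCases with
    | last => simpa using min_le_right _ v
    | cast r =>
      simp only [Fin.snoc_castSucc]
      exact le_trans (min_le_left _ _) (Finset.inf'_le _ (Finset.mem_univ r))

lemma exists_snoc_eq (F : Fin (n + 1) → ℝ) (v c : ℝ) :
    (∃ r : Fin (n + 2), (Fin.snoc F v : Fin (n + 2) → ℝ) r = c) ↔ (∃ r, F r = c) ∨ v = c := by
  constructor
  · rintro ⟨r, hr⟩
    rcases Fin.eq_castSucc_or_eq_last r with ⟨r', rfl⟩ | rfl
    · left; exact ⟨r', by simpa using hr⟩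
    · right; simpa using hr
  · rintro (⟨r, hr⟩ | hv)
    · exact ⟨Fin.castSucc r, by simpa using hr⟩
    · exact ⟨Fin.last _, by simpa using hv⟩

lemma mminOver_snoc_zero (ht0 : 0 < t) (ht1 : t < 1) (F : Fin (n + 1) → ℝ)
    (hF : ∀ r, F r = 0 ∨ F r = t ∨ F r = 1 - t ∨ F r = 1) :
    mminOver t (Fin.snoc F (0 : ℝ)) = 0 := by
  unfold mminOver
  split
  · rfl
  · rw [inf'_snoc]
    have h0 : (0:ℝ) ≤ Finset.univ.inf' Finset.univ_nonempty F := by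
      apply Finset.le_inf'
      intro b _
      rcases hF b with h | h | h | h <;> rw [h] <;> linarith
    exact min_eq_right h0

lemma mminOver_snoc_one (ht0 : 0 < t) (ht1 : t < 1) (F : Fin (n + 1) → ℝ)
    (hF : ∀ r, F r = 0 ∨ F r = t ∨ F r = 1 - t ∨ F r = 1) :
    mminOver t (Fin.snoc F (1 : ℝ)) = mminOver t F := by
  unfold mminOver
  simp only [exists_snoc_eq]
  have h1t : (1:ℝ) ≠ t := by linarith
  have h1t' : (1:ℝ) ≠ 1 - t := by intro h; linarith [h]
  simp only [h1t, h1t', or_false]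
  split
  · rfl
  · rw [inf'_snoc]
    apply min_eq_left
    obtain ⟨b, _, hb⟩ := Finset.exists_mem_eq_inf' Finset.univ_nonempty F
    rw [hb]
    rcases hF b with h | h | h | h <;> rw [h] <;> linarith

lemma mminOver_snoc_t_add (ht0 : 0 < t) (ht1 : t < 1) (ht2 : t ≠ 1 / 2)
    (F : Fin (n + 1) → ℝ)
    (hF : ∀ r, F r = 0 ∨ F r = t ∨ F r = 1 - t ∨ F r = 1) :
    mminOver t (Fin.snoc F t) + mminOver t (Fin.snoc F (1 - t)) = mminOver t F := by
  have htne : t ≠ 1 - t := by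
    intro h; apply ht2; linarith
  unfold mminOver
  simp only [exists_snoc_eq]
  simp only [htne, htne.symm, or_false, eq_self_iff_true, or_true]
  by_cases h1 : ∃ r, F r = t <;> by_cases h2 : ∃ r, F r = 1 - t
  · simp [h1, h2]
  · -- t occurs, 1 - t does not
    rw [if_neg (by tauto), if_pos (by tauto), if_neg (by tauto)]
    rw [inf'_snoc, add_zero]
    apply min_eq_left
    obtain ⟨r, hr⟩ := h1
    exact le_trans (Finset.inf'_le _ (Finset.mem_univ r)) (le_of_eq hr)
  · -- 1 - t occurs, t does not
    rw [if_pos (by tauto), if_neg (by tauto), if_neg (by tauto)]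
    rw [inf'_snoc, zero_add]
    apply min_eq_left
    obtain ⟨r, hr⟩ := h2
    exact le_trans (Finset.inf'_le _ (Finset.mem_univ r)) (le_of_eq hr)
  · -- neither occurs
    rw [if_neg (by tauto), if_neg (by tauto), if_neg (by tauto)]
    rw [inf'_snoc, inf'_snoc]
    obtain ⟨b, _, hb⟩ := Finset.exists_mem_eq_inf' Finset.univ_nonempty F
    have hb01 : F b = 0 ∨ F b = 1 := by
      rcases hF b with h | h | h | h
      · left; exact h
      · exact absurd ⟨b, h⟩ h1
      · exact absurd ⟨b, h⟩ h2
      · right; exact h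
    rcases hb01 with h | h
    · rw [hb, h]
      rw [min_eq_left (by linarith), min_eq_left (by linarith)]
      ring
    · have hge : ∀ r, F r = 1 := by
        intro r
        have hle : (1:ℝ) ≤ F r := by
          have := Finset.inf'_le (s := (Finset.univ : Finset (Fin (n + 1)))) F
            (Finset.mem_univ r)
          rw [hb, h] at this
          exact this
        rcases hF r with hr | hr | hr | hr
        · exfalso; rw [hr] at hle; linarith
        · exact absurd ⟨r, hr⟩ h1
        · exact absurd ⟨r, hr⟩ h2
        · exact hr
      rw [hb, h]
      rw [min_eq_right (by linarith), min_eq_right (by linarith)]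
      ring

end MMin

section Step

variable {t : ℝ}

lemma Ln_snoc_sum (ht0 : 0 < t) (ht1 : t < 1) (ht2 : t ≠ 1 / 2) {n : ℕ}
    (i j : Fin (n + 2) → Bool) (k l : Fin (n + 1) → Bool) :
    ∑ ab : Bool × Bool, Ln t i j (Fin.snoc k ab.1) (Fin.snoc l ab.2)
      = Ln t (fun r => i (Fin.castSucc r)) (fun r => j (Fin.castSucc r)) k l := by
  unfold Ln
  set G : Fin (n + 1) → ℝ := fun r =>
    L1 t (sproj (fun r => i (Fin.castSucc r)) r) (sproj (fun r => j (Fin.castSucc r)) r)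
      (sproj k r) (sproj l r) with hGdef
  have hFG : ∀ r, G r = 0 ∨ G r = t ∨ G r = 1 - t ∨ G r = 1 := fun r => L1_mem t _ _ _ _
  have hG : ∀ a b : Bool,
      (fun r : Fin (n + 2) => L1 t (sproj i r) (sproj j r)
          (sproj (Fin.snoc k a) r) (sproj (Fin.snoc l b) r))
        = Fin.snoc G (L1 t (sproj i (Fin.last (n + 1))) (sproj j (Fin.last (n + 1)))
            (xor a (sproj k (Fin.last n))) (xor b (sproj l (Fin.last n)))) := by
    intro a b
    funext r
    rcases Fin.eq_castSucc_or_eq_last r with ⟨r', rfl⟩ | rfl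
    · rw [Fin.snoc_castSucc, sproj_snoc_castSucc, sproj_snoc_castSucc,
        sproj_castSucc i, sproj_castSucc j]
    · rw [Fin.snoc_last, sproj_snoc_last, sproj_snoc_last]
  rw [Fintype.sum_prod_type]
  simp only [Fintype.sum_bool, hG]
  generalize sproj i (Fin.last (n + 1)) = α
  generalize sproj j (Fin.last (n + 1)) = β
  generalize sproj k (Fin.last n) = c
  generalize sproj l (Fin.last n) = d
  have hz := mminOver_snoc_zero ht0 ht1 G hFG
  have ho := mminOver_snoc_one ht0 ht1 G hFG
  have ha := mminOver_snoc_t_add ht0 ht1 ht2 G hFG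
  cases α <;> cases β <;> cases c <;> cases d <;>
    simp only [Bool.xor_false, Bool.xor_true, Bool.not_true, Bool.not_false, L1] <;>
    simp only [hz, ho] <;> linarith [ha]

end Step

section Main

variable {t : ℝ}

lemma sum_snoc_single {n : ℕ} (g : (Fin (n + 2) → Bool) → ℝ) :
    ∑ x : Fin (n + 2) → Bool, g x
      = ∑ k : Fin (n + 1) → Bool, ∑ a : Bool, g (Fin.snoc k a) := by
  rw [← Equiv.sum_comp (Fin.snocEquiv (fun _ => Bool)) g, Fintype.sum_prod_type]
  rw [Finset.sum_comm]
  rfl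

lemma sum_snoc_pair {n : ℕ} (f : ((Fin (n + 2) → Bool) × (Fin (n + 2) → Bool)) → ℝ) :
    ∑ p : (Fin (n + 2) → Bool) × (Fin (n + 2) → Bool), f p
      = ∑ k : Fin (n + 1) → Bool, ∑ l : Fin (n + 1) → Bool, ∑ ab : Bool × Bool,
          f (Fin.snoc k ab.1, Fin.snoc l ab.2) := by
  rw [Fintype.sum_prod_type]
  rw [sum_snoc_single (fun x => ∑ y, f (x, y))]
  have h1 : ∀ (k : Fin (n + 1) → Bool) (a : Bool),
      ∑ y : Fin (n + 2) → Bool, f (Fin.snoc k a, y)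
        = ∑ l : Fin (n + 1) → Bool, ∑ b : Bool, f (Fin.snoc k a, Fin.snoc l b) :=
    fun k a => sum_snoc_single _
  simp only [h1]
  congr 1
  funext k
  rw [Finset.sum_comm]
  congr 1
  funext l
  rw [Fintype.sum_prod_type]

lemma castLE_eq_castSucc_castLE {m n : ℕ} (h : m + 1 ≤ n + 1) (r : Fin (m + 1)) :
    Fin.castLE (Nat.le_succ_of_le h) r = Fin.castSucc (Fin.castLE h r) := by
  ext; rfl

lemma key (ht0 : 0 < t) (ht1 : t < 1) (ht2 : t ≠ 1 / 2) (m : ℕ) :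
    ∀ n, ∀ hmn : m ≤ n, ∀ (fi fj fk fl : Fin (m + 1) → Bool) (i j : Fin (n + 1) → Bool),
      (fun r : Fin (m + 1) => i (Fin.castLE (Nat.succ_le_succ hmn) r)) = fi →
      (fun r : Fin (m + 1) => j (Fin.castLE (Nat.succ_le_succ hmn) r)) = fj →
      ∑ p ∈ Finset.univ.filter
          (fun p : (Fin (n + 1) → Bool) × (Fin (n + 1) → Bool) =>
            (fun r : Fin (m + 1) => p.1 (Fin.castLE (Nat.succ_le_succ hmn) r)) = fk ∧
            (fun r : Fin (m + 1) => p.2 (Fin.castLE (Nat.succ_le_succ hmn) r)) = fl),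
          Ln t i j p.1 p.2 = Ln t fi fj fk fl := by
  intro n hmn
  induction n, hmn using Nat.le_induction with
  | base =>
    intro fi fj fk fl i j hi hj
    have hid : ∀ (x : Fin (m + 1) → Bool),
        (fun r : Fin (m + 1) => x (Fin.castLE (by omega) r)) = x := by
      intro x; funext r; rfl
    have hfilter : Finset.univ.filter
        (fun p : (Fin (m + 1) → Bool) × (Fin (m + 1) → Bool) =>
          (fun r : Fin (m + 1) => p.1 (Fin.castLE (by omega) r)) = fk ∧
          (fun r : Fin (m + 1) => p.2 (Fin.castLE (by omega) r)) = fl)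
        = {(fk, fl)} := by
      ext p
      simp only [Finset.mem_filter, Finset.mem_univ, true_and, Finset.mem_singleton, hid]
      constructor
      · rintro ⟨h1, h2⟩; exact Prod.ext h1 h2
      · rintro rfl; exact ⟨rfl, rfl⟩
    rw [hfilter, Finset.sum_singleton]
    rw [hid i] at hi
    rw [hid j] at hj
    rw [hi, hj]
  | succ n hmn ih =>
    intro fi fj fk fl i j hi hj
    rw [Finset.sum_filter, sum_snoc_pair]
    have hcond : ∀ (k : Fin (n + 1) → Bool) (a : Bool),
        (fun r : Fin (m + 1) => (Fin.snoc k a : Fin (n + 2) → Bool)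
            (Fin.castLE (by omega) r))
          = fun r : Fin (m + 1) => k (Fin.castLE (by omega) r) := by
      intro k a
      funext r
      rw [castLE_eq_castSucc_castLE (by omega), Fin.snoc_castSucc]
    have step : ∀ (k l : Fin (n + 1) → Bool),
        ∑ ab : Bool × Bool, Ln t i j (Fin.snoc k ab.1) (Fin.snoc l ab.2)
          = Ln t (fun r => i (Fin.castSucc r)) (fun r => j (Fin.castSucc r)) k l :=
      fun k l => Ln_snoc_sum ht0 ht1 ht2 i j k l
    have : ∀ (k l : Fin (n + 1) → Bool),
        (∑ ab : Bool × Bool,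
          if ((fun r : Fin (m + 1) => (Fin.snoc k ab.1 : Fin (n + 2) → Bool)
                (Fin.castLE (by omega) r)) = fk ∧
              (fun r : Fin (m + 1) => (Fin.snoc l ab.2 : Fin (n + 2) → Bool)
                (Fin.castLE (by omega) r)) = fl)
            then Ln t i j (Fin.snoc k ab.1) (Fin.snoc l ab.2) else 0)
          = if ((fun r : Fin (m + 1) => k (Fin.castLE (by omega) r)) = fk ∧
              (fun r : Fin (m + 1) => l (Fin.castLE (by omega) r)) = fl)
            then Ln t (fun r => i (Fin.castSucc r)) (fun r => j (Fin.castSucc r)) k l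
            else 0 := by
      intro k l
      simp only [hcond]
      split
      · exact step k l
      · simp
    simp only [this]
    rw [← Finset.sum_product']
    rw [← Finset.sum_filter]
    have := ih fi fj fk fl (fun r => i (Fin.castSucc r)) (fun r => j (Fin.castSucc r))
      (by funext r; rw [← hi]; simp only; rw [castLE_eq_castSucc_castLE (by omega)])
      (by funext r; rw [← hj]; simp only; rw [castLE_eq_castSucc_castLE (by omega)])
    rw [← this]
    rfl

end Main


/-- color ignorance. Summing `Lⁿ` over outputs whose truncation to the
first `m` colors is fixed recovers the corresponding entry of `Lᵐ`. -/
theorem Ln_color_ignorance (t : ℝ) (ht0 : 0 < t) (ht1 : t < 1) (ht2 : t ≠ 1 / 2)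
    (m n : ℕ) (hmn : m ≤ n)
    (fi fj fk fl : Fin (m + 1) → Bool)
    (i j : Fin (n + 1) → Bool)
    (hi : (fun r : Fin (m + 1) => i (Fin.castLE (by omega) r)) = fi)
    (hj : (fun r : Fin (m + 1) => j (Fin.castLE (by omega) r)) = fj) :
    ∑ p ∈ Finset.univ.filter
        (fun p : (Fin (n + 1) → Bool) × (Fin (n + 1) → Bool) =>
          (fun r : Fin (m + 1) => p.1 (Fin.castLE (by omega) r)) = fk ∧
          (fun r : Fin (m + 1) => p.2 (Fin.castLE (by omega) r)) = fl),
        Ln t i j p.1 p.2 = Ln t fi fj fk fl := by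
  exact key ht0 ht1 ht2 m n hmn fi fj fk fl i j hi hj
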